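/- Let R be an integral domain which is a ℚ-algebra, let a, b ∈ R, and let f = C a + (C b)·X ∈ R⟦X⟧ (the affine series a + bX). Then for every n ≥ 1: A_n(f) = (C a + (C b)·X) · (C b)^{n−1}. Consequently the flow of the linear autonomous equation δ_tΦ = a + bΦ is Φ_f = X + ∑_{n≥1} (a + bX)·b^{n−1}·T^n/n!. -/

import Mathlib

open PowerSeries

/-- The autonomous polynomials of a power series: `A_1(f) = f` and
`A_{n+1}(f) = f·δ(A_n(f))`.  Here `autPolyPS f m` is `A_{m+1}(f)`. -/
noncomputable def autPolyPS {R : Type*} [CommRing R] (f : PowerSeries R) :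
    ℕ → PowerSeries R
  | 0 => f
  | m + 1 => f * derivativeFun (autPolyPS f m)

/-- The flow `Φ_f = X + ∑_{n≥1} A_n(f)·T^n/n!` of `f ∈ R⟦X⟧`, as a power series in the time
variable `T` with coefficients in `R⟦X⟧`. -/
noncomputable def flowPS {R : Type*} [CommRing R] [Algebra ℚ R] (f : PowerSeries R) :
    PowerSeries (PowerSeries R) :=
  PowerSeries.mk fun n => if n = 0 then PowerSeries.X
    else PowerSeries.C (algebraMap ℚ R (1 / n.factorial)) * autPolyPS f (n - 1)

private lemma deriv_affine {R : Type*} [CommRing R] (a b : R) :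
    derivativeFun (PowerSeries.C a + PowerSeries.C b * PowerSeries.X) =
      PowerSeries.C b := by
  rw [derivativeFun_add, (by intro r; exact derivative_C : ∀ r : R, derivativeFun (PowerSeries.C r) = 0), derivativeFun_mul, (by intro r; exact derivative_C : ∀ r : R, derivativeFun (PowerSeries.C r) = 0)]
  have : derivativeFun (PowerSeries.X : PowerSeries R) = 1 := derivative_X (R := R)
  rw [this]
  simp [smul_eq_mul]

private lemma autPoly_affine_aux {R : Type*} [CommRing R] (a b : R) (m : ℕ) :
    autPolyPS (PowerSeries.C a + PowerSeries.C b * PowerSeries.X) m =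
      (PowerSeries.C a + PowerSeries.C b * PowerSeries.X) * PowerSeries.C b ^ m := by
  induction m with
  | zero => simp [autPolyPS]
  | succ k ih =>
      rw [autPolyPS, ih, derivativeFun_mul, deriv_affine]
      have : derivativeFun ((PowerSeries.C b : PowerSeries R) ^ k) = 0 := by
        rw [← map_pow, (by intro r; exact derivative_C : ∀ r : R, derivativeFun (PowerSeries.C r) = 0)]
      rw [this]
      ring_nf

/-- For an integral domain `R` which is a `ℚ`-algebra and `a, b ∈ R`, the autonomous
polynomials of the affine series `f = a + bX` are `A_n(f) = (a + bX)·b^{n-1}` for `n ≥ 1`;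
consequently the flow of `δ_tΦ = a + bΦ` is `X + ∑_{n≥1} (a+bX)·b^{n-1}·T^n/n!`. -/
theorem autPolyPS_affine {R : Type*} [CommRing R] [IsDomain R] [Algebra ℚ R] (a b : R) :
    (∀ n : ℕ, 1 ≤ n →
      autPolyPS (PowerSeries.C a + PowerSeries.C b * PowerSeries.X) (n - 1) =
        (PowerSeries.C a + PowerSeries.C b * PowerSeries.X) * PowerSeries.C b ^ (n - 1)) ∧
    (∀ n : ℕ, 1 ≤ n →
      PowerSeries.coeff n
          (flowPS (PowerSeries.C a + PowerSeries.C b * PowerSeries.X)) =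
        PowerSeries.C (algebraMap ℚ R (1 / n.factorial)) *
          ((PowerSeries.C a + PowerSeries.C b * PowerSeries.X) *
            PowerSeries.C b ^ (n - 1))) := by
  refine ⟨fun n _ => autPoly_affine_aux a b (n - 1), fun n hn => ?_⟩
  rw [flowPS, coeff_mk, if_neg (by omega), autPoly_affine_aux]
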